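/- Let x = 2cos(2πθ₁) + 2cos(2πθ₂) and y = 1 + 2cos(2π(θ₁+θ₂)). Then the Jacobian determinant J = det(∂(x,y)/∂(θ₁,θ₂)) satisfies J² = 16π⁴(y+1)(3−y)(4y−x²+4). -/

import Mathlib

open Real

lemma hd1 (c θ : ℝ) : HasDerivAt (fun t : ℝ => Real.cos (c * t)) (-(c * Real.sin (c * θ))) θ := by
  have h := (Real.hasDerivAt_cos (c * θ)).comp θ ((hasDerivAt_id θ).const_mul c)
  simpa [mul_comm, Function.comp_def] using h

/-- For the change of variables `x = 2cos(2πθ₁) + 2cos(2πθ₂)`,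
`y = 1 + 2cos(2π(θ₁+θ₂))` (Weyl group `D₄⁽²⁾` of `SO(4)`), the Jacobian determinant `J`
satisfies `J² = 16π⁴(y+1)(3−y)(4y−x²+4)`. -/
theorem jacobian_sq_D4_2 (θ₁ θ₂ : ℝ) :
    letI x : ℝ → ℝ → ℝ := fun t₁ t₂ => 2 * Real.cos (2 * Real.pi * t₁) + 2 * Real.cos (2 * Real.pi * t₂)
    letI y : ℝ → ℝ → ℝ := fun t₁ t₂ => 1 + 2 * Real.cos (2 * Real.pi * (t₁ + t₂))
    letI J : ℝ := deriv (fun t => x t θ₂) θ₁ * deriv (fun t => y θ₁ t) θ₂ -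
      deriv (fun t => x θ₁ t) θ₂ * deriv (fun t => y t θ₂) θ₁
    J ^ 2 = 16 * Real.pi ^ 4 * (y θ₁ θ₂ + 1) * (3 - y θ₁ θ₂) *
      (4 * y θ₁ θ₂ - (x θ₁ θ₂) ^ 2 + 4) := by
  beta_reduce
  set c := 2 * Real.pi with hc
  have d1 : deriv (fun t => 2 * Real.cos (c * t) + 2 * Real.cos (c * θ₂)) θ₁ = -(2 * c * Real.sin (c * θ₁)) := by
    have : HasDerivAt (fun t => 2 * Real.cos (c * t) + 2 * Real.cos (c * θ₂)) (2 * -(c * Real.sin (c * θ₁)) + 0) θ₁ :=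
      HasDerivAt.add (((hd1 c θ₁)).const_mul 2) (hasDerivAt_const θ₁ _)
    simpa [mul_comm, mul_assoc, mul_left_comm] using this.deriv
  have d2 : deriv (fun t => 2 * Real.cos (c * θ₁) + 2 * Real.cos (c * t)) θ₂ = -(2 * c * Real.sin (c * θ₂)) := by
    have : HasDerivAt (fun t => 2 * Real.cos (c * θ₁) + 2 * Real.cos (c * t)) (0 + 2 * -(c * Real.sin (c * θ₂))) θ₂ :=
      HasDerivAt.add (hasDerivAt_const θ₂ _) (((hd1 c θ₂)).const_mul 2)
    simpa [mul_comm, mul_assoc, mul_left_comm] using this.deriv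
  have d3 : deriv (fun t => 1 + 2 * Real.cos (c * (θ₁ + t))) θ₂ = -(2 * c * Real.sin (c * (θ₁ + θ₂))) := by
    have h : HasDerivAt (fun t : ℝ => Real.cos (c * (θ₁ + t)))
        (-(c * Real.sin (c * (θ₁ + θ₂)))) θ₂ := by
      have := (hd1 c (θ₁ + θ₂)).comp θ₂ ((hasDerivAt_const θ₂ θ₁).add (hasDerivAt_id θ₂))
      simpa [Function.comp_def] using this
    have : HasDerivAt (fun t => 1 + 2 * Real.cos (c * (θ₁ + t))) (0 + 2 * -(c * Real.sin (c * (θ₁ + θ₂)))) θ₂ :=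
      HasDerivAt.add (hasDerivAt_const θ₂ _) (h.const_mul 2)
    simpa [mul_comm, mul_assoc, mul_left_comm] using this.deriv
  have d4 : deriv (fun t => 1 + 2 * Real.cos (c * (t + θ₂))) θ₁ = -(2 * c * Real.sin (c * (θ₁ + θ₂))) := by
    have h : HasDerivAt (fun t : ℝ => Real.cos (c * (t + θ₂)))
        (-(c * Real.sin (c * (θ₁ + θ₂)))) θ₁ := by
      have := (hd1 c (θ₁ + θ₂)).comp θ₁ ((hasDerivAt_id θ₁).add (hasDerivAt_const θ₁ θ₂))
      simpa [Function.comp_def] using this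
    have : HasDerivAt (fun t => 1 + 2 * Real.cos (c * (t + θ₂))) (0 + 2 * -(c * Real.sin (c * (θ₁ + θ₂)))) θ₁ :=
      HasDerivAt.add (hasDerivAt_const θ₁ _) (h.const_mul 2)
    simpa [mul_comm, mul_assoc, mul_left_comm] using this.deriv
  rw [d1, d2, d3, d4]
  simp only [hc]
  have hadd : 2 * Real.pi * (θ₁ + θ₂) = 2 * Real.pi * θ₁ + 2 * Real.pi * θ₂ := by ring
  rw [hadd, Real.cos_add, Real.sin_add]
  have h1 := Real.sin_sq_add_cos_sq (2 * Real.pi * θ₁)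
  have h2 := Real.sin_sq_add_cos_sq (2 * Real.pi * θ₂)
  set sA := Real.sin (2 * Real.pi * θ₁)
  set cA := Real.cos (2 * Real.pi * θ₁)
  set sB := Real.sin (2 * Real.pi * θ₂)
  set cB := Real.cos (2 * Real.pi * θ₂)
  linear_combination 256 * Real.pi ^ 4 * ((((sA - sB) ^ 2 - (sA ^ 2 + cA ^ 2 - 1) -
      (sB ^ 2 + cB ^ 2 - 1)) * (1 + (sB ^ 2 + cB ^ 2 - 1)) + (sA * cB + cA * sB) ^ 2)) * h1 +
    256 * Real.pi ^ 4 * (((sA - sB) ^ 2 - (sA ^ 2 + cA ^ 2 - 1) - (sB ^ 2 + cB ^ 2 - 1)) +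
      (sA * cB + cA * sB) ^ 2) * h2
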